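/- Let b : Fin n → ℕ be a monotone function. Suppose l * u * k = l' * u' * k' in GL n F, where l and l' are block diagonal (l i j = 0 and l' i j = 0 whenever b i ≠ b j), u and u' are block upper-triangular unipotent (u i j = 0 whenever b i > b j, u i i = 1, u i j = 0 whenever b i = b j and i ≠ j, and likewise for u'), and k, k' lie in GL n O. Then every entry of the matrix l'⁻¹ * l and every entry of its inverse l⁻¹ * l' lies in O. Consequently the map sending g = l u k to the coset of l is a well-defined surjection from GL n F modulo GL n O to the block-diagonal subgroup modulo its O-points. (Lemma 12, well-definedness of Φ^G_L.) -/

import Mathlib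

/- Setting: `F = 𝔽q((X))` is the field of formal Laurent series over a finite field `𝔽q`,
with valuation `v = Valued.v : F → ℤₘ₀` (normalized by `v X = ofAdd (-1)`), ring of
integers `O = 𝔽q[[X]] = {f | v f ≤ 1}`. -/

open scoped Multiplicative
open scoped WithZero

noncomputable section

variable (𝔽q : Type*) [Field 𝔽q] [Fintype 𝔽q]

/-- `F = 𝔽q((X))`, the field of formal Laurent series over `𝔽q`. -/
abbrev F : Type _ := LaurentSeries 𝔽q

/-- The uniformizer `X` of `F`. -/
def XX : F 𝔽q := ((PowerSeries.X : PowerSeries 𝔽q) : LaurentSeries 𝔽q)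

/-- The sup-norm `‖x‖ = sup_i v (x i)` of a row vector over `F`. -/
def vnorm {n : ℕ} (x : Fin n → F 𝔽q) : ℤᵐ⁰ :=
  Finset.univ.sup fun i => Valued.v (x i)

/-- `f` lies in the ring of integers `O = 𝔽q[[X]]` iff `v f ≤ 1`. -/
def inO (f : F 𝔽q) : Prop := Valued.v f ≤ 1

/-- `f` lies in `R = 𝔽q[X⁻¹]`: a Laurent series with finite support contained in
nonpositive degrees. -/
def inR (f : F 𝔽q) : Prop := f.support.Finite ∧ ∀ d ∈ f.support, d ≤ 0

/-- `g ∈ GL n F` lies in `GL n O`: every entry of `g` and of `g⁻¹` lies in `O`. -/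
def inGLO {n : ℕ} (g : GL (Fin n) (F 𝔽q)) : Prop :=
  (∀ i j, inO 𝔽q ((g : Matrix (Fin n) (Fin n) (F 𝔽q)) i j)) ∧
  (∀ i j, inO 𝔽q ((↑(g⁻¹) : Matrix (Fin n) (Fin n) (F 𝔽q)) i j))

/-- `γ ∈ GL n F` lies in `GL n R`: every entry of `γ` and of `γ⁻¹` lies in `R`. -/
def inGLR {n : ℕ} (γ : GL (Fin n) (F 𝔽q)) : Prop :=
  (∀ i j, inR 𝔽q ((γ : Matrix (Fin n) (Fin n) (F 𝔽q)) i j)) ∧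
  (∀ i j, inR 𝔽q ((↑(γ⁻¹) : Matrix (Fin n) (Fin n) (F 𝔽q)) i j))


section Aux

variable {n : ℕ}

private lemma key_entry {R : Type*} [CommRing R] (b : Fin n → ℕ)
    (N m U : Matrix (Fin n) (Fin n) R)
    (hN1 : ∀ i c, b c < b i → N i c = 0)
    (hN2 : ∀ i c, b i = b c → N i c = if i = c then 1 else 0)
    (hm : ∀ c d, b c ≠ b d → m c d = 0)
    (hU1 : ∀ d j, b j < b d → U d j = 0)
    (hU2 : ∀ d j, b d = b j → U d j = if d = j then 1 else 0)
    (i j : Fin n) (hij : b i = b j) : (N * m * U) i j = m i j := by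
  have hMU : ∀ c, b j < b c → (m * U) c j = 0 := by
    intro c hc
    rw [Matrix.mul_apply]
    apply Finset.sum_eq_zero
    intro d _
    by_cases hbd : b c = b d
    · rw [hU1 d j (hbd ▸ hc), mul_zero]
    · rw [hm c d hbd, zero_mul]
  rw [Matrix.mul_assoc, Matrix.mul_apply, Finset.sum_eq_single i]
  · rw [hN2 i i rfl, if_pos rfl, one_mul, Matrix.mul_apply, Finset.sum_eq_single j]
    · rw [hU2 j j rfl, if_pos rfl, mul_one]
    · intro d _ hdj
      by_cases hbd : b d = b j
      · rw [hU2 d j hbd, if_neg hdj, mul_zero]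
      · rw [hm i d (fun h => hbd (h ▸ hij)), zero_mul]
    · intro h; exact absurd (Finset.mem_univ j) h
  · intro c _ hci
    rcases lt_trichotomy (b c) (b i) with h | h | h
    · rw [hN1 i c h, zero_mul]
    · rw [hN2 i c h.symm, if_neg (fun hh => hci hh.symm), zero_mul]
    · rw [hMU c (hij ▸ h), mul_zero]
  · intro h; exact absurd (Finset.mem_univ i) h

private lemma blockdiag_inv (b : Fin n → ℕ) (l : GL (Fin n) (F 𝔽q))
    (hl : ∀ i j, b i ≠ b j → (l : Matrix (Fin n) (Fin n) (F 𝔽q)) i j = 0) :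
    ∀ i j, b i ≠ b j → ((↑l : Matrix (Fin n) (Fin n) (F 𝔽q))⁻¹) i j = 0 := by
  haveI : Invertible (↑l : Matrix (Fin n) (Fin n) (F 𝔽q)) := l.invertible
  have h1 : Matrix.BlockTriangular (↑l : Matrix (Fin n) (Fin n) (F 𝔽q)) b :=
    fun i j h => hl i j h.ne'
  have h2 : Matrix.BlockTriangular (↑l : Matrix (Fin n) (Fin n) (F 𝔽q))
      (OrderDual.toDual ∘ b) := fun i j h => hl i j (ne_of_lt h)
  intro i j hij
  rcases hij.lt_or_gt with h | h
  · exact Matrix.blockTriangular_inv_of_blockTriangular h2 h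
  · exact Matrix.blockTriangular_inv_of_blockTriangular h1 h

private lemma inv_triangular (b : Fin n → ℕ) (u : GL (Fin n) (F 𝔽q))
    (hu₁ : ∀ i j, b j < b i → (u : Matrix (Fin n) (Fin n) (F 𝔽q)) i j = 0) :
    ∀ i j, b j < b i → ((↑u : Matrix (Fin n) (Fin n) (F 𝔽q))⁻¹) i j = 0 :=
  haveI : Invertible (↑u : Matrix (Fin n) (Fin n) (F 𝔽q)) := u.invertible
  fun _ _ h =>
    Matrix.blockTriangular_inv_of_blockTriangular (fun i j hh => hu₁ i j hh) h

private lemma mul_inv_coe (u : GL (Fin n) (F 𝔽q)) :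
    (↑u : Matrix (Fin n) (Fin n) (F 𝔽q)) * (↑u : Matrix (Fin n) (Fin n) (F 𝔽q))⁻¹ = 1 := by
  rw [← Matrix.coe_units_inv, ← Units.val_mul, mul_inv_cancel, Units.val_one]

private lemma inv_diag (b : Fin n → ℕ) (u : GL (Fin n) (F 𝔽q))
    (hu₁ : ∀ i j, b j < b i → (u : Matrix (Fin n) (Fin n) (F 𝔽q)) i j = 0)
    (hu₂ : ∀ i, (u : Matrix (Fin n) (Fin n) (F 𝔽q)) i i = 1)
    (hu₃ : ∀ i j, b i = b j → i ≠ j → (u : Matrix (Fin n) (Fin n) (F 𝔽q)) i j = 0) :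
    ∀ i j, b i = b j →
      ((↑u : Matrix (Fin n) (Fin n) (F 𝔽q))⁻¹) i j = if i = j then 1 else 0 := by
  intro i j hij
  have h1 : (1 : Matrix (Fin n) (Fin n) (F 𝔽q)) i j =
      ∑ c, (↑u : Matrix (Fin n) (Fin n) (F 𝔽q)) i c *
        ((↑u : Matrix (Fin n) (Fin n) (F 𝔽q))⁻¹) c j := by
    rw [← mul_inv_coe 𝔽q u, Matrix.mul_apply]
  rw [Finset.sum_eq_single i] at h1
  · rw [hu₂ i, one_mul] at h1
    rw [← h1, Matrix.one_apply]
  · intro c _ hci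
    rcases lt_trichotomy (b c) (b i) with h | h | h
    · rw [hu₁ i c h, zero_mul]
    · rw [hu₃ i c h.symm (fun hh => hci hh.symm), zero_mul]
    · rw [inv_triangular 𝔽q b u hu₁ c j (hij ▸ h), mul_zero]
  · intro h; exact absurd (Finset.mem_univ i) h

private lemma main_aux (b : Fin n → ℕ) (l u k l' u' k' : GL (Fin n) (F 𝔽q))
    (hl : ∀ i j, b i ≠ b j → (l : Matrix (Fin n) (Fin n) (F 𝔽q)) i j = 0)
    (hl' : ∀ i j, b i ≠ b j → (l' : Matrix (Fin n) (Fin n) (F 𝔽q)) i j = 0)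
    (hu₁ : ∀ i j, b j < b i → (u : Matrix (Fin n) (Fin n) (F 𝔽q)) i j = 0)
    (hu₂ : ∀ i, (u : Matrix (Fin n) (Fin n) (F 𝔽q)) i i = 1)
    (hu₃ : ∀ i j, b i = b j → i ≠ j → (u : Matrix (Fin n) (Fin n) (F 𝔽q)) i j = 0)
    (hu'₁ : ∀ i j, b j < b i → (u' : Matrix (Fin n) (Fin n) (F 𝔽q)) i j = 0)
    (hu'₂ : ∀ i, (u' : Matrix (Fin n) (Fin n) (F 𝔽q)) i i = 1)
    (hu'₃ : ∀ i j, b i = b j → i ≠ j → (u' : Matrix (Fin n) (Fin n) (F 𝔽q)) i j = 0)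
    (hk : ∀ i j, inO 𝔽q ((↑(k⁻¹) : Matrix (Fin n) (Fin n) (F 𝔽q)) i j))
    (hk' : ∀ i j, inO 𝔽q ((k' : Matrix (Fin n) (Fin n) (F 𝔽q)) i j))
    (heq : l * u * k = l' * u' * k') :
    ∀ i j, inO 𝔽q ((↑(l'⁻¹ * l) : Matrix (Fin n) (Fin n) (F 𝔽q)) i j) := by
  have hκ : u'⁻¹ * (l'⁻¹ * l) * u = k' * k⁻¹ := by
    calc u'⁻¹ * (l'⁻¹ * l) * u
        = u'⁻¹ * l'⁻¹ * (l * u * k) * k⁻¹ := by group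
      _ = u'⁻¹ * l'⁻¹ * (l' * u' * k') * k⁻¹ := by rw [heq]
      _ = k' * k⁻¹ := by group
  set m : Matrix (Fin n) (Fin n) (F 𝔽q) :=
    (↑l' : Matrix (Fin n) (Fin n) (F 𝔽q))⁻¹ * (↑l : Matrix (Fin n) (Fin n) (F 𝔽q)) with hmdef
  have hcoe : (↑(l'⁻¹ * l) : Matrix (Fin n) (Fin n) (F 𝔽q)) = m := by
    rw [hmdef, Units.val_mul, Matrix.coe_units_inv]
  have hκM : (↑u' : Matrix (Fin n) (Fin n) (F 𝔽q))⁻¹ * m *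
      (↑u : Matrix (Fin n) (Fin n) (F 𝔽q)) =
      (↑k' : Matrix (Fin n) (Fin n) (F 𝔽q)) *
        (↑k : Matrix (Fin n) (Fin n) (F 𝔽q))⁻¹ := by
    have h := congrArg (Units.val) hκ
    simp only [Units.val_mul, Matrix.coe_units_inv] at h
    rw [hmdef]
    exact h
  have hm : ∀ c d, b c ≠ b d → m c d = 0 := by
    intro c d h
    rw [hmdef, Matrix.mul_apply]
    apply Finset.sum_eq_zero
    intro e _
    by_cases hbe : b c = b e
    · rw [hl e d (fun hh => h (hbe.trans hh)), mul_zero]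
    · rw [blockdiag_inv 𝔽q b l' hl' c e hbe, zero_mul]
  intro i j
  rw [hcoe]
  by_cases hbij : b i = b j
  · have hkey := key_entry b ((↑u' : Matrix (Fin n) (Fin n) (F 𝔽q))⁻¹) m
      (↑u : Matrix (Fin n) (Fin n) (F 𝔽q))
      (inv_triangular 𝔽q b u' hu'₁) (inv_diag 𝔽q b u' hu'₁ hu'₂ hu'₃) hm hu₁
      (fun d j' h => by
        by_cases hdj : d = j'
        · rw [if_pos hdj, hdj, hu₂]
        · rw [if_neg hdj, hu₃ d j' h hdj]) i j hbij
    rw [hκM] at hkey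
    rw [← hkey, Matrix.mul_apply]
    show Valued.v _ ≤ 1
    refine Valued.v.map_sum_le fun c _ => ?_
    rw [map_mul]
    have hk2 : inO 𝔽q (((↑k : Matrix (Fin n) (Fin n) (F 𝔽q))⁻¹) c j) := by
      have := hk c j
      rwa [Matrix.coe_units_inv] at this
    exact mul_le_one' (hk' i c) hk2
  · rw [hm i j hbij]
    show Valued.v (0 : F 𝔽q) ≤ 1
    rw [map_zero]
    exact zero_le'

end Aux

/-- **Lemma 12 (well-definedness of `Φ^G_L`).** If `l * u * k = l' * u' * k'` with
`l, l'` block diagonal, `u, u'` block upper-triangular unipotent and `k, k' ∈ GL n O`,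
then every entry of `l'⁻¹ * l` and of its inverse `l⁻¹ * l'` lies in `O`; hence
`g = l u k ↦ l` induces a well-defined surjection
`GL n F / GL n O → L(F) / L(O)` onto the block diagonal subgroup modulo its
`O`-points. -/
theorem levi_component_well_defined (n : ℕ) (hn : 0 < n)
    (b : Fin n → ℕ) (hb : Monotone b) (l u k l' u' k' : GL (Fin n) (F 𝔽q))
    (hl : ∀ i j, b i ≠ b j → (l : Matrix (Fin n) (Fin n) (F 𝔽q)) i j = 0)
    (hl' : ∀ i j, b i ≠ b j → (l' : Matrix (Fin n) (Fin n) (F 𝔽q)) i j = 0)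
    (hu₁ : ∀ i j, b j < b i → (u : Matrix (Fin n) (Fin n) (F 𝔽q)) i j = 0)
    (hu₂ : ∀ i, (u : Matrix (Fin n) (Fin n) (F 𝔽q)) i i = 1)
    (hu₃ : ∀ i j, b i = b j → i ≠ j → (u : Matrix (Fin n) (Fin n) (F 𝔽q)) i j = 0)
    (hu'₁ : ∀ i j, b j < b i → (u' : Matrix (Fin n) (Fin n) (F 𝔽q)) i j = 0)
    (hu'₂ : ∀ i, (u' : Matrix (Fin n) (Fin n) (F 𝔽q)) i i = 1)
    (hu'₃ : ∀ i j, b i = b j → i ≠ j → (u' : Matrix (Fin n) (Fin n) (F 𝔽q)) i j = 0)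
    (hk : inGLO 𝔽q k) (hk' : inGLO 𝔽q k')
    (heq : l * u * k = l' * u' * k') :
    (∀ i j, inO 𝔽q ((↑(l'⁻¹ * l) : Matrix (Fin n) (Fin n) (F 𝔽q)) i j)) ∧
    (∀ i j, inO 𝔽q ((↑(l⁻¹ * l') : Matrix (Fin n) (Fin n) (F 𝔽q)) i j)) := by
  exact ⟨main_aux 𝔽q b l u k l' u' k' hl hl' hu₁ hu₂ hu₃ hu'₁ hu'₂ hu'₃ hk.2 hk'.1 heq,
    main_aux 𝔽q b l' u' k' l u k hl' hl hu'₁ hu'₂ hu'₃ hu₁ hu₂ hu₃ hk'.2 hk.1 heq.symm⟩
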